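/- Let ū_h ∈ U with ‖ū_h‖_{X*} ≤ 1/α and ȳ_h ∈ Y be arbitrary, and set ρ_y := Aȳ_h − Bū_h ∈ W*. Then (1/2)‖Cȳ_h − g^δ‖_G² − (1/2)‖Cȳ − g^δ‖_G² ≤ (1/α)‖B*ŵ‖_X − ū_h(B*ŵ) + ‖C(A⁻¹ρ_y)‖_G · ‖Cȳ_h − g^δ‖_G. -/

import Mathlib

open RealInnerProductSpace NormedSpace

/-- A posteriori estimate of the discrepancy functional error for Ivanov
regularization at the discrete state ȳ_h. -/
theorem stmt_8
    {X G Y W : Type*}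
    [NormedAddCommGroup X] [NormedSpace ℝ X] [CompleteSpace X]
    [NormedAddCommGroup G] [InnerProductSpace ℝ G] [CompleteSpace G]
    [NormedAddCommGroup Y] [NormedSpace ℝ Y] [CompleteSpace Y]
    [NormedAddCommGroup W] [NormedSpace ℝ W] [CompleteSpace W]
    (A : Y ≃L[ℝ] StrongDual ℝ W) (Astar : W ≃L[ℝ] StrongDual ℝ Y)
    (hAadj : ∀ (y : Y) (w : W), A y w = Astar w y)
    (Bstar : W →L[ℝ] X) (B : StrongDual ℝ X →L[ℝ] StrongDual ℝ W)
    (hB : ∀ (u : StrongDual ℝ X) (w : W), B u w = u (Bstar w))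
    (C : Y →L[ℝ] G) (Cstar : G →L[ℝ] StrongDual ℝ Y)
    (hCadj : ∀ (y : Y) (g : G), ⟪C y, g⟫ = Cstar g y)
    (gδ : G) (α : ℝ) (hα : 0 < α)
    (ubar : StrongDual ℝ X) (ybar : Y)
    (hubar : ‖ubar‖ ≤ 1/α) (hybar : ybar = A.symm (B ubar))
    (hmin : ∀ u : StrongDual ℝ X, ‖u‖ ≤ 1/α →
      (1/2) * ‖C ybar - gδ‖^2 ≤ (1/2) * ‖C (A.symm (B u)) - gδ‖^2)
    (yh : Y) (what : W)
    (hwhat : what = Astar.symm (-(Cstar (C yh - gδ))))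
    (uh : StrongDual ℝ X) (huh : ‖uh‖ ≤ 1/α) :
    (1/2) * ‖C yh - gδ‖^2 - (1/2) * ‖C ybar - gδ‖^2 ≤
      (1/α) * ‖Bstar what‖ - uh (Bstar what)
      + ‖C (A.symm (A yh - B uh))‖ * ‖C yh - gδ‖ := by

  set a := C yh - gδ with ha
  set b := C ybar - gδ with hb
  set z := A.symm (A yh - B uh) with hz
  set d := A.symm (B uh) - ybar with hd
  have hzd : yh - ybar = z + d := by
    rw [hz, hd, map_sub, A.symm_apply_apply]; abel
  have hab : a - b = C z + C d := by
    rw [← map_add, ← hzd, map_sub, ha, hb]; abel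
  have key : (1/2)*‖a‖^2 - (1/2)*‖b‖^2 ≤ ⟪a, a - b⟫ := by
    have h1 : ‖a - b‖^2 = ‖a‖^2 - 2 * ⟪a, b⟫ + ‖b‖^2 := norm_sub_sq_real a b
    have h2 : ⟪a, a - b⟫ = ‖a‖^2 - ⟪a, b⟫ := by
      rw [inner_sub_right, real_inner_self_eq_norm_sq]
    have h3 : (0:ℝ) ≤ ‖a - b‖^2 := sq_nonneg _
    linarith
  have hCs : Cstar a = -(Astar what) := by
    rw [hwhat, Astar.apply_symm_apply, neg_neg]
  have h2 : ⟪a, C d⟫ = ubar (Bstar what) - uh (Bstar what) := by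
    have hAd : A d = B uh - B ubar := by
      rw [hd, map_sub, A.apply_symm_apply, hybar, A.apply_symm_apply]
    rw [real_inner_comm, hCadj, hCs]
    have := hAadj d what
    rw [ContinuousLinearMap.neg_apply, ← this, hAd, ContinuousLinearMap.sub_apply,
      hB, hB]
    ring
  have h1 : ⟪a, C z⟫ ≤ ‖C z‖ * ‖a‖ := by
    have := real_inner_le_norm a (C z)
    linarith [this, mul_comm ‖a‖ ‖C z‖]
  have hub : ubar (Bstar what) ≤ (1/α) * ‖Bstar what‖ := by
    calc ubar (Bstar what) ≤ ‖ubar‖ * ‖Bstar what‖ := by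
          exact le_trans (le_abs_self _) (ubar.le_opNorm _)
      _ ≤ (1/α) * ‖Bstar what‖ := by
          exact mul_le_mul_of_nonneg_right hubar (norm_nonneg _)
  have := key
  rw [hab, inner_add_right, h2] at this
  linarith
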